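/- Eckart–Young (Frobenius norm): among all matrices of rank at most p, the rank-p SVD truncation X̃ minimizes the Frobenius distance to X: ‖X − X̃‖_F ≤ ‖X − B‖_F for every B with rank(B) ≤ p. -/

import Mathlib

open Matrix BigOperators Finset

open RealInnerProductSpace in
private lemma EY.proj_bound {N : ℕ} (K : Submodule ℝ (EuclideanSpace ℝ (Fin N)))
    (v w : EuclideanSpace ℝ (Fin N)) (hw : w ∈ K) :
    ‖v‖^2 - ∑ j, (⟪((stdOrthonormalBasis ℝ K) j : EuclideanSpace ℝ (Fin N)), v⟫)^2
      ≤ ‖v - w‖^2 := by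
  set b := stdOrthonormalBasis ℝ K with hb
  set P := K.orthogonalProjectionOnto v with hP
  set Pv : EuclideanSpace ℝ (Fin N) := (P : EuclideanSpace ℝ (Fin N)) with hPv
  have horth : ∀ z ∈ K, ⟪v - Pv, z⟫ = 0 := fun z hz =>
    Submodule.starProjection_inner_eq_zero v z hz
  have h1 : ‖v - w‖^2 = ‖v - Pv‖^2 + ‖Pv - w‖^2 := by
    have hd : v - w = (v - Pv) + (Pv - w) := by abel
    rw [hd, norm_add_sq_real, horth _ (K.sub_mem P.2 hw)]
    ring
  have h2 : ‖v‖^2 = ‖v - Pv‖^2 + ‖Pv‖^2 := by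
    have hd : v = (v - Pv) + Pv := by abel
    nth_rewrite 1 [hd]
    rw [norm_add_sq_real, horth _ P.2]
    ring
  have h3 : ‖Pv‖^2 = ∑ j, (⟪(b j : EuclideanSpace ℝ (Fin N)), v⟫)^2 := by
    have hparseval := b.sum_inner_mul_inner P P
    have hco : ∀ j, (⟪b j, P⟫ : ℝ) = ⟪(b j : EuclideanSpace ℝ (Fin N)), v⟫ := by
      intro j
      rw [Submodule.coe_inner]
      have : ⟪(b j : EuclideanSpace ℝ (Fin N)), v - Pv⟫ = 0 := by
        rw [real_inner_comm]; exact horth _ (b j).2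
      rw [inner_sub_right] at this
      linarith
    rw [← real_inner_self_eq_norm_sq, hPv, ← Submodule.coe_inner, ← hparseval]
    refine Finset.sum_congr rfl fun j _ => ?_
    rw [show (inner ℝ P (b j) : ℝ) = inner ℝ ((b j : EuclideanSpace ℝ (Fin N))) v from
      (real_inner_comm _ _).trans (hco j), hco j, sq]
  nlinarith [sq_nonneg ‖Pv - w‖]

private lemma EY.swap4 {α β γ δ M : Type*} [AddCommMonoid M] (sa : Finset α) (sb : Finset β)
    (sc : Finset γ) (sd : Finset δ) (f : α → β → γ → δ → M) :
    ∑ a ∈ sa, ∑ b ∈ sb, ∑ c ∈ sc, ∑ d ∈ sd, f a b c d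
      = ∑ c ∈ sc, ∑ d ∈ sd, ∑ a ∈ sa, ∑ b ∈ sb, f a b c d := by
  calc ∑ a ∈ sa, ∑ b ∈ sb, ∑ c ∈ sc, ∑ d ∈ sd, f a b c d
      = ∑ a ∈ sa, ∑ c ∈ sc, ∑ b ∈ sb, ∑ d ∈ sd, f a b c d :=
        Finset.sum_congr rfl fun a _ => Finset.sum_comm
    _ = ∑ c ∈ sc, ∑ a ∈ sa, ∑ b ∈ sb, ∑ d ∈ sd, f a b c d := Finset.sum_comm
    _ = ∑ c ∈ sc, ∑ a ∈ sa, ∑ d ∈ sd, ∑ b ∈ sb, f a b c d :=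
        Finset.sum_congr rfl fun c _ => Finset.sum_congr rfl fun a _ => Finset.sum_comm
    _ = ∑ c ∈ sc, ∑ d ∈ sd, ∑ a ∈ sa, ∑ b ∈ sb, f a b c d :=
        Finset.sum_congr rfl fun c _ => Finset.sum_comm

private lemma EY.frob_expand {n m r : ℕ} (σ : Fin r → ℝ) (U : Fin r → Fin n → ℝ)
    (V : Fin r → Fin m → ℝ)
    (hUorth : ∀ i j : Fin r, ∑ a : Fin n, U i a * U j a = if i = j then 1 else 0)
    (hVorth : ∀ i j : Fin r, ∑ a : Fin m, V i a * V j a = if i = j then 1 else 0)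
    (s : Finset (Fin r)) :
    ∑ a : Fin n, ∑ b : Fin m, (∑ i ∈ s, σ i * (U i a * V i b))^2 = ∑ i ∈ s, σ i ^ 2 := by
  have h1 : ∀ (a : Fin n) (b : Fin m), (∑ i ∈ s, σ i * (U i a * V i b))^2
      = ∑ i ∈ s, ∑ j ∈ s, (σ i * σ j) * ((U i a * U j a) * (V i b * V j b)) := by
    intro a b
    rw [sq, Finset.sum_mul_sum]
    exact Finset.sum_congr rfl fun i _ => Finset.sum_congr rfl fun j _ => by ring
  simp_rw [h1]
  rw [EY.swap4]
  have h2 : ∀ i j : Fin r, ∑ a : Fin n, ∑ b : Fin m,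
      (σ i * σ j) * ((U i a * U j a) * (V i b * V j b))
      = (σ i * σ j) * ((∑ a : Fin n, U i a * U j a) * (∑ b : Fin m, V i b * V j b)) := by
    intro i j
    rw [Finset.sum_mul_sum, Finset.mul_sum]
    exact Finset.sum_congr rfl fun a _ => by rw [Finset.mul_sum]
  refine Finset.sum_congr rfl fun i hi => ?_
  rw [Finset.sum_eq_single_of_mem i hi]
  · rw [h2, hUorth, hVorth, if_pos rfl]; ring
  · intro j _ hj
    rw [h2, hUorth, hVorth, if_neg (Ne.symm hj)]
    ring

private lemma EY.card_filter_lt {r p : ℕ} (hp : p ≤ r) :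
    (Finset.univ.filter (fun i : Fin r => (i : ℕ) < p)).card = p := by
  have : Finset.univ.filter (fun i : Fin r => (i : ℕ) < p)
      = Finset.univ.map (Fin.castLEEmb hp) := by
    ext i
    simp only [mem_filter, mem_univ, true_and, mem_map, Fin.castLEEmb]
    constructor
    · intro h; exact ⟨⟨i, h⟩, by simp [Fin.castLE]⟩
    · rintro ⟨j, rfl⟩; simpa using j.isLt
  rw [this, Finset.card_map, Finset.card_univ, Fintype.card_fin]

private lemma EY.comb_lemma {r p : ℕ} (hp : p ≤ r) (τ : Fin r → ℝ) (hτ0 : ∀ i, 0 ≤ τ i)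
    (hmono : ∀ i j : Fin r, i ≤ j → τ j ≤ τ i) (c : Fin r → ℝ) (h0 : ∀ i, 0 ≤ c i)
    (h1 : ∀ i, c i ≤ 1) (hsum : ∑ i, c i ≤ (p : ℝ)) :
    ∑ i, τ i * c i ≤ ∑ i ∈ Finset.univ.filter (fun i : Fin r => (i : ℕ) < p), τ i := by
  rcases eq_or_lt_of_le hp with h | hpr
  · have he : Finset.univ.filter (fun i : Fin r => (i : ℕ) < p) = Finset.univ := by
      ext i
      have := i.isLt
      simp only [mem_filter, mem_univ, true_and, iff_true]
      omega
    rw [he]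
    exact Finset.sum_le_sum fun i _ => mul_le_of_le_one_right (hτ0 i) (h1 i)
  · set t := τ ⟨p, hpr⟩ with ht
    set s₁ := Finset.univ.filter (fun i : Fin r => (i : ℕ) < p) with hs₁
    set s₂ := Finset.univ.filter (fun i : Fin r => ¬ (i : ℕ) < p) with hs₂
    have hsplit : ∀ g : Fin r → ℝ, ∑ i ∈ s₁, g i + ∑ i ∈ s₂, g i = ∑ i, g i :=
      fun g => Finset.sum_filter_add_sum_filter_not _ _ g
    have hA : ∑ i ∈ s₁, τ i * c i ≤ ∑ i ∈ s₁, (τ i + t * (c i - 1)) := by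
      refine Finset.sum_le_sum fun i hi => ?_
      have hip : (i : ℕ) < p := by simpa [hs₁] using hi
      have hle : t ≤ τ i := hmono i ⟨p, hpr⟩ (by simp [Fin.le_def]; omega)
      nlinarith [h1 i]
    have hB : ∑ i ∈ s₂, τ i * c i ≤ ∑ i ∈ s₂, t * c i := by
      refine Finset.sum_le_sum fun i hi => ?_
      have hip : ¬ (i : ℕ) < p := by simpa [hs₂] using hi
      have hle : τ i ≤ t := hmono ⟨p, hpr⟩ i (by simp [Fin.le_def]; omega)
      exact mul_le_mul_of_nonneg_right hle (h0 i)
    have hcard : s₁.card = p := EY.card_filter_lt hp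
    have e1 : ∑ i ∈ s₁, (τ i + t * (c i - 1))
        = ∑ i ∈ s₁, τ i + (t * ∑ i ∈ s₁, c i - t * p) := by
      rw [Finset.sum_add_distrib, ← Finset.mul_sum, Finset.sum_sub_distrib,
        Finset.sum_const, hcard]
      ring
    have e2 : ∑ i ∈ s₂, t * c i = t * ∑ i ∈ s₂, c i := (Finset.mul_sum _ _ _).symm
    have hc12 : ∑ i ∈ s₁, c i + ∑ i ∈ s₂, c i ≤ (p : ℝ) := by
      rw [hsplit]; exact hsum
    have ht0 : 0 ≤ t := hτ0 _
    have := hsplit (fun i => τ i * c i)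
    nlinarith [hA, hB]

/-- Eckart–Young theorem in the Frobenius norm: the rank-`p` SVD truncation `X̃`
of `X` minimizes the Frobenius distance to `X` among all matrices of rank at
most `p`. -/
theorem eckart_young_frobenius
    {n m r : ℕ} (p : ℕ) (hp : p ≤ r)
    (σ : Fin r → ℝ) (U : Fin r → Fin n → ℝ) (V : Fin r → Fin m → ℝ)
    (hσpos : ∀ i, 0 < σ i)
    (hσmono : ∀ i j : Fin r, i ≤ j → σ j ≤ σ i)
    (hUorth : ∀ i j : Fin r, ∑ a : Fin n, U i a * U j a = if i = j then 1 else 0)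
    (hVorth : ∀ i j : Fin r, ∑ a : Fin m, V i a * V j a = if i = j then 1 else 0)
    (X Xt : Matrix (Fin n) (Fin m) ℝ)
    (hX : X = ∑ i : Fin r, σ i • Matrix.vecMulVec (U i) (V i))
    (hXt : Xt = ∑ i ∈ Finset.univ.filter (fun i : Fin r => (i : ℕ) < p),
      σ i • Matrix.vecMulVec (U i) (V i)) :
    ∀ B : Matrix (Fin n) (Fin m) ℝ, B.rank ≤ p →
      Real.sqrt (∑ a : Fin n, ∑ b : Fin m, (X a b - Xt a b) ^ 2)
        ≤ Real.sqrt (∑ a : Fin n, ∑ b : Fin m, (X a b - B a b) ^ 2) := by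
  open RealInnerProductSpace in
  intro B hB
  apply Real.sqrt_le_sqrt
  -- notation
  set s₂ := Finset.univ.filter (fun i : Fin r => ¬ (i : ℕ) < p) with hs₂
  -- entries of X and Xt
  have hXab : ∀ a b, X a b = ∑ i : Fin r, σ i * (U i a * V i b) := by
    intro a b
    rw [hX]
    simp [Matrix.sum_apply, Matrix.vecMulVec_apply, mul_assoc]
  have hXtab : ∀ a b, Xt a b = ∑ i ∈ Finset.univ.filter (fun i : Fin r => (i : ℕ) < p),
      σ i * (U i a * V i b) := by
    intro a b
    rw [hXt]
    simp [Matrix.sum_apply, Matrix.vecMulVec_apply, mul_assoc]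
  have hdiff : ∀ a b, X a b - Xt a b = ∑ i ∈ s₂, σ i * (U i a * V i b) := by
    intro a b
    rw [hXab, hXtab, hs₂]
    have := Finset.sum_filter_add_sum_filter_not Finset.univ
      (fun i : Fin r => (i : ℕ) < p) (fun i => σ i * (U i a * V i b))
    linarith
  -- LHS value
  have hLHS : ∑ a : Fin n, ∑ b : Fin m, (X a b - Xt a b) ^ 2 = ∑ i ∈ s₂, σ i ^ 2 := by
    simp_rw [hdiff]
    exact EY.frob_expand σ U V hUorth hVorth s₂
  rw [hLHS]
  -- Euclidean versions of U, V
  set U' : Fin r → EuclideanSpace ℝ (Fin n) :=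
    fun i => (WithLp.equiv 2 (Fin n → ℝ)).symm (U i) with hU'def
  set V' : Fin r → EuclideanSpace ℝ (Fin m) :=
    fun i => (WithLp.equiv 2 (Fin m → ℝ)).symm (V i) with hV'def
  have hinner_n : ∀ (x y : EuclideanSpace ℝ (Fin n)), ⟪x, y⟫ = ∑ a, x a * y a := by
    intro x y; simp [PiLp.inner_apply, RCLike.inner_apply]; exact Finset.sum_congr rfl fun _ _ => mul_comm _ _
  have hinner_m : ∀ (x y : EuclideanSpace ℝ (Fin m)), ⟪x, y⟫ = ∑ a, x a * y a := by
    intro x y; simp [PiLp.inner_apply, RCLike.inner_apply]; exact Finset.sum_congr rfl fun _ _ => mul_comm _ _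
  have hnorm_n : ∀ (x : EuclideanSpace ℝ (Fin n)), ‖x‖^2 = ∑ a, x a ^ 2 := by
    intro x; rw [← real_inner_self_eq_norm_sq, hinner_n]; simp [sq]
  have hnorm_m : ∀ (x : EuclideanSpace ℝ (Fin m)), ‖x‖^2 = ∑ a, x a ^ 2 := by
    intro x; rw [← real_inner_self_eq_norm_sq, hinner_m]; simp [sq]
  have hU'app : ∀ i a, U' i a = U i a := fun i a => rfl
  have hV'app : ∀ i a, V' i a = V i a := fun i a => rfl
  have hU' : Orthonormal ℝ U' := by
    rw [orthonormal_iff_ite]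
    intro i j
    rw [hinner_n]
    exact hUorth i j
  have hV' : Orthonormal ℝ V' := by
    rw [orthonormal_iff_ite]
    intro i j
    rw [hinner_m]
    exact hVorth i j
  -- the subspace K
  set K : Submodule ℝ (EuclideanSpace ℝ (Fin n)) :=
    Submodule.map ((WithLp.linearEquiv 2 ℝ (Fin n → ℝ)).symm :
      (Fin n → ℝ) →ₗ[ℝ] EuclideanSpace ℝ (Fin n)) (LinearMap.range B.mulVecLin) with hK
  have hfinrankK : Module.finrank ℝ K ≤ p := by
    rw [hK, LinearEquiv.finrank_map_eq]
    exact hB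
  set q : Fin (Module.finrank ℝ K) → EuclideanSpace ℝ (Fin n) :=
    fun j => ((stdOrthonormalBasis ℝ K) j : EuclideanSpace ℝ (Fin n)) with hqdef
  have hq : Orthonormal ℝ q := by
    have hb := (stdOrthonormalBasis ℝ K).orthonormal
    rw [orthonormal_iff_ite] at hb ⊢
    intro i j
    rw [hqdef, ← Submodule.coe_inner]
    exact hb i j
  -- coefficients
  set c : Fin r → ℝ := fun i => ∑ j, (⟪q j, U' i⟫)^2 with hcdef
  have h0c : ∀ i, 0 ≤ c i := fun i => Finset.sum_nonneg fun j _ => sq_nonneg _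
  have h1c : ∀ i, c i ≤ 1 := by
    intro i
    have := hq.sum_inner_products_le (U' i) (s := Finset.univ)
    simp only [Real.norm_eq_abs, sq_abs] at this
    calc c i ≤ ‖U' i‖^2 := this
      _ = 1 := by rw [hU'.1 i]; norm_num
  have hsumc : ∑ i, c i ≤ (p : ℝ) := by
    have hswap : ∑ i, c i = ∑ j, ∑ i, (⟪U' i, q j⟫)^2 := by
      rw [hcdef]
      rw [Finset.sum_comm]
      exact Finset.sum_congr rfl fun j _ => Finset.sum_congr rfl fun i _ => by
        rw [real_inner_comm]
    rw [hswap]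
    have hbound : ∀ j, ∑ i, (⟪U' i, q j⟫)^2 ≤ 1 := by
      intro j
      have := hU'.sum_inner_products_le (q j) (s := Finset.univ)
      simp only [Real.norm_eq_abs, sq_abs] at this
      calc ∑ i, (⟪U' i, q j⟫)^2 ≤ ‖q j‖^2 := this
        _ = 1 := by rw [hq.1 j]; norm_num
    calc ∑ j, ∑ i, (⟪U' i, q j⟫)^2 ≤ ∑ j : Fin (Module.finrank ℝ K), (1:ℝ) :=
          Finset.sum_le_sum fun j _ => hbound j
      _ = (Module.finrank ℝ K : ℝ) := by simp
      _ ≤ (p : ℝ) := by exact_mod_cast hfinrankK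
  -- X * V i = σ i • U i
  have hXv : ∀ (i : Fin r) (a : Fin n), ∑ b, X a b * V i b = σ i * U i a := by
    intro i a
    simp_rw [hXab, Finset.sum_mul]
    rw [Finset.sum_comm]
    rw [Finset.sum_eq_single_of_mem i (Finset.mem_univ i)]
    · have : ∑ b, σ i * (U i a * V i b) * V i b = σ i * U i a * ∑ b, V i b * V i b := by
        rw [Finset.mul_sum]; exact Finset.sum_congr rfl fun b _ => by ring
      rw [this, hVorth, if_pos rfl, mul_one]
    · intro j _ hj
      have : ∑ b, σ j * (U j a * V j b) * V i b = σ j * U j a * ∑ b, V j b * V i b := by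
        rw [Finset.mul_sum]; exact Finset.sum_congr rfl fun b _ => by ring
      rw [this, hVorth, if_neg hj, mul_zero]
  -- B * V i ∈ K
  have hBmem : ∀ i : Fin r,
      ((WithLp.equiv 2 (Fin n → ℝ)).symm (B.mulVec (V i)) : EuclideanSpace ℝ (Fin n)) ∈ K := by
    intro i
    rw [hK]
    exact Submodule.mem_map_of_mem (LinearMap.mem_range.2 ⟨V i, B.mulVecLin_apply _⟩)
  -- key per-index inequality
  have key : ∀ i : Fin r, σ i ^ 2 * (1 - c i)
      ≤ ∑ a, (∑ b, (X a b - B a b) * V i b)^2 := by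
    intro i
    set v : EuclideanSpace ℝ (Fin n) := σ i • U' i with hv
    set w : EuclideanSpace ℝ (Fin n) :=
      (WithLp.equiv 2 (Fin n → ℝ)).symm (B.mulVec (V i)) with hw
    have hproj := EY.proj_bound K v w (hBmem i)
    have hnv : ‖v‖^2 = σ i ^ 2 := by
      rw [hv, norm_smul, hU'.1 i]
      simp [sq_abs]
    have hiv : ∀ j, ⟪q j, v⟫ = σ i * ⟪q j, U' i⟫ := by
      intro j
      rw [hv, real_inner_smul_right]
    have hsum_iv : ∑ j, (⟪q j, v⟫)^2 = σ i ^2 * c i := by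
      simp_rw [hiv, mul_pow, hcdef, Finset.mul_sum]
    have hcoord : ∀ a, (v - w) a = σ i * U i a - ∑ b, B a b * V i b := by
      intro a
      have h1 : (v - w) a = v a - w a := rfl
      have h2 : v a = σ i * U i a := rfl
      have h3 : w a = ∑ b, B a b * V i b := rfl
      rw [h1, h2, h3]
    have hvw : ‖v - w‖^2 = ∑ a, (∑ b, (X a b - B a b) * V i b)^2 := by
      rw [hnorm_n]
      refine Finset.sum_congr rfl fun a _ => ?_
      rw [hcoord a]
      congr 1
      rw [← hXv i a]
      rw [← Finset.sum_sub_distrib]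
      exact Finset.sum_congr rfl fun b _ => by ring
    calc σ i ^ 2 * (1 - c i) = ‖v‖^2 - ∑ j, (⟪q j, v⟫)^2 := by
          rw [hnv, hsum_iv]; ring
      _ ≤ ‖v - w‖^2 := hproj
      _ = _ := hvw
  -- Bessel over rows
  have hbessel : ∑ i : Fin r, ∑ a, (∑ b, (X a b - B a b) * V i b)^2
      ≤ ∑ a : Fin n, ∑ b : Fin m, (X a b - B a b) ^ 2 := by
    rw [Finset.sum_comm]
    refine Finset.sum_le_sum fun a _ => ?_
    set x : EuclideanSpace ℝ (Fin m) :=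
      (WithLp.equiv 2 (Fin m → ℝ)).symm (fun b => X a b - B a b) with hx
    have hxa : ∀ b, x b = X a b - B a b := fun b => rfl
    have hbes := hV'.sum_inner_products_le x (s := Finset.univ)
    simp only [Real.norm_eq_abs, sq_abs] at hbes
    have hnx : ‖x‖^2 = ∑ b, (X a b - B a b)^2 := by
      rw [hnorm_m]
      exact Finset.sum_congr rfl fun b _ => by rw [hxa]
    calc ∑ i : Fin r, (∑ b, (X a b - B a b) * V i b)^2
        = ∑ i : Fin r, (⟪V' i, x⟫)^2 := by
          refine Finset.sum_congr rfl fun i _ => ?_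
          rw [hinner_m]
          congr 1
          exact Finset.sum_congr rfl fun b _ => by rw [hV'app, hxa]; ring
      _ ≤ ‖x‖^2 := hbes
      _ = ∑ b, (X a b - B a b)^2 := hnx
  -- combinatorial step
  have hcomb : ∑ i, (σ i ^ 2) * c i
      ≤ ∑ i ∈ Finset.univ.filter (fun i : Fin r => (i : ℕ) < p), σ i ^ 2 := by
    refine EY.comb_lemma hp (fun i => σ i ^ 2) (fun i => sq_nonneg _) ?_ c h0c h1c hsumc
    intro i j hij
    exact pow_le_pow_left₀ (le_of_lt (hσpos j)) (hσmono i j hij) 2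
  -- put everything together
  have hsplitσ : ∑ i ∈ Finset.univ.filter (fun i : Fin r => (i : ℕ) < p), σ i ^2
      + ∑ i ∈ s₂, σ i ^2 = ∑ i, σ i ^2 :=
    Finset.sum_filter_add_sum_filter_not _ _ _
  have hkeysum : ∑ i, σ i ^2 * (1 - c i)
      ≤ ∑ i : Fin r, ∑ a, (∑ b, (X a b - B a b) * V i b)^2 :=
    Finset.sum_le_sum fun i _ => key i
  have hexpand : ∑ i, σ i ^2 * (1 - c i) = ∑ i, σ i ^2 - ∑ i, σ i ^2 * c i := by
    rw [← Finset.sum_sub_distrib]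
    exact Finset.sum_congr rfl fun i _ => by ring
  linarith [hbessel, hkeysum, hcomb]
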